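/- If a unit-speed curve ψ in ℝ³ satisfies cκ + acτ = 1 for constants c ≠ 0 and a, and τ ≠ 0 everywhere, then the curve φ(s) = ψ(s) + (c/κ(s))N(s) (with N = κn) has, at corresponding points, unit tangent T_φ = ±(aT + B/κ)/√(a²+1) and its principal normal is parallel to that of ψ; hence (ψ, φ) is a Bertrand pair. -/

import Mathlib

open scoped RealInnerProductSpace

/-- If a unit speed curve `ψ` satisfies `cκ + acτ = 1` with `c ≠ 0` and `τ ≠ 0`, then the
curve `φ = ψ + (c/κ)N` has unit tangent `±(aT + B/κ)/√(a²+1)` and its principal normal is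
parallel to that of `ψ`; hence `(ψ, φ)` is a Bertrand pair. -/
theorem linear_relation_gives_bertrand_mate
    (I : Set ℝ) (hI : IsOpen I)
    (ψ T N B : ℝ → EuclideanSpace ℝ (Fin 3)) (κ κ' τ : ℝ → ℝ) (c a : ℝ)
    (hc : c ≠ 0)
    (hκpos : ∀ s ∈ I, 0 < κ s)
    (hτ0 : ∀ s ∈ I, τ s ≠ 0)
    (hψ : ∀ s ∈ I, HasDerivAt ψ (T s) s)
    (hT : ∀ s ∈ I, HasDerivAt T (N s) s)
    (hN : ∀ s ∈ I, HasDerivAt N (-(κ s ^ 2) • T s + (κ' s / κ s) • N s + τ s • B s) s)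
    (hB : ∀ s ∈ I, HasDerivAt B (-τ s • N s + (κ' s / κ s) • B s) s)
    (hκ : ∀ s ∈ I, HasDerivAt κ (κ' s) s)
    (hTT : ∀ s ∈ I, ⟪T s, T s⟫ = 1)
    (hNN : ∀ s ∈ I, ⟪N s, N s⟫ = κ s ^ 2)
    (hBB : ∀ s ∈ I, ⟪B s, B s⟫ = κ s ^ 2)
    (hTN : ∀ s ∈ I, ⟪T s, N s⟫ = 0)
    (hTB : ∀ s ∈ I, ⟪T s, B s⟫ = 0)
    (hNB : ∀ s ∈ I, ⟪N s, B s⟫ = 0)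
    -- the linear relation `cκ + acτ = 1`
    (hlin : ∀ s ∈ I, c * κ s + a * c * τ s = 1) :
    (∀ s ∈ I,
      ‖deriv (fun u => ψ u + (c / κ u) • N u) s‖⁻¹ •
          deriv (fun u => ψ u + (c / κ u) • N u) s =
        (Real.sqrt (a ^ 2 + 1))⁻¹ • (a • T s + (κ s)⁻¹ • B s) ∨
      ‖deriv (fun u => ψ u + (c / κ u) • N u) s‖⁻¹ •
          deriv (fun u => ψ u + (c / κ u) • N u) s =
        -((Real.sqrt (a ^ 2 + 1))⁻¹ • (a • T s + (κ s)⁻¹ • B s))) ∧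
    -- the principal normal direction of `φ` is parallel to `N`
    (∀ s ∈ I, ∃ r : ℝ,
      deriv (fun u => ‖deriv (fun v => ψ v + (c / κ v) • N v) u‖⁻¹ •
        deriv (fun v => ψ v + (c / κ v) • N v) u) s = r • N s) := by
  have hsq : (0:ℝ) < a ^ 2 + 1 := by positivity
  have hsqrt : (0:ℝ) < Real.sqrt (a ^ 2 + 1) := Real.sqrt_pos.mpr hsq
  set φ : ℝ → EuclideanSpace ℝ (Fin 3) := fun u => ψ u + (c / κ u) • N u with hφdef
  set W : ℝ → EuclideanSpace ℝ (Fin 3) := fun u => a • T u + (κ u)⁻¹ • B u with hWdef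
  set V : ℝ → EuclideanSpace ℝ (Fin 3) :=
    fun u => (Real.sqrt (a ^ 2 + 1))⁻¹ • W u with hVdef
  -- derivative of φ
  have hφ' : ∀ s ∈ I, HasDerivAt φ ((c * τ s) • W s) s := by
    intro s hs
    have hκne : κ s ≠ 0 := ne_of_gt (hκpos s hs)
    have h1 : HasDerivAt (fun u => c / κ u) ((0 * κ s - c * κ' s) / κ s ^ 2) s :=
      (hasDerivAt_const s c).div (hκ s hs) hκne
    have h2 := (hψ s hs).add (h1.smul (hN s hs))
    refine h2.congr_deriv ?_
    symm
    have hl := hlin s hs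
    simp only [hWdef]
    ext i
    simp only [WithLp.ofLp_add, WithLp.ofLp_smul, WithLp.ofLp_neg, Pi.add_apply, Pi.smul_apply,
      Pi.neg_apply, smul_eq_mul]
    field_simp
    linear_combination (κ s ^ 2 * T s i) * hl
  -- inner products
  have hWW : ∀ s ∈ I, ⟪W s, W s⟫ = a ^ 2 + 1 := by
    intro s hs
    have hκne : κ s ≠ 0 := ne_of_gt (hκpos s hs)
    have h1 : ⟪B s, T s⟫ = 0 := by rw [real_inner_comm]; exact hTB s hs
    simp only [hWdef, inner_add_left, inner_add_right, real_inner_smul_left,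
      real_inner_smul_right, hTT s hs, hTB s hs, hBB s hs, h1]
    field_simp
    ring
  have hWnorm : ∀ s ∈ I, ‖W s‖ = Real.sqrt (a ^ 2 + 1) := by
    intro s hs
    rw [show a ^ 2 + 1 = ‖W s‖ ^ 2 by rw [← real_inner_self_eq_norm_sq]; exact (hWW s hs).symm,
      Real.sqrt_sq (norm_nonneg _)]
  -- part 1
  have part1 : ∀ s ∈ I,
      ‖deriv φ s‖⁻¹ • deriv φ s = V s ∨ ‖deriv φ s‖⁻¹ • deriv φ s = -V s := by
    intro s hs
    have hD : deriv φ s = (c * τ s) • W s := (hφ' s hs).deriv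
    have hnorm : ‖deriv φ s‖ = |c * τ s| * Real.sqrt (a ^ 2 + 1) := by
      rw [hD, norm_smul, Real.norm_eq_abs, hWnorm s hs]
    have hk : c * τ s ≠ 0 := mul_ne_zero hc (hτ0 s hs)
    rcases hk.lt_or_gt with hneg | hpos
    · right
      rw [hD] at hnorm ⊢
      rw [hnorm, smul_smul, hVdef, abs_of_neg hneg, ← neg_smul]
      congr 1
      field_simp [hτ0 s hs]
    · left
      rw [hD] at hnorm ⊢
      rw [hnorm, smul_smul, hVdef, abs_of_pos hpos]
      congr 1
      field_simp [hτ0 s hs]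
  refine ⟨part1, ?_⟩
  -- part 2
  intro s hs
  set f : ℝ → EuclideanSpace ℝ (Fin 3) := fun u => ‖deriv φ u‖⁻¹ • deriv φ u with hfdef
  by_cases hdiff : DifferentiableAt ℝ f s
  · -- V is differentiable with derivative parallel to N
    have hκne : κ s ≠ 0 := ne_of_gt (hκpos s hs)
    have hV' : HasDerivAt V
        (((Real.sqrt (a ^ 2 + 1))⁻¹ * (a - τ s / κ s)) • N s) s := by
      have h1 : HasDerivAt (fun u => (κ u)⁻¹) (-(κ' s) / κ s ^ 2) s := (hκ s hs).inv hκne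
      have h2 := (((hT s hs).const_smul a).add (h1.smul (hB s hs))).const_smul
        ((Real.sqrt (a ^ 2 + 1))⁻¹)
      refine h2.congr_deriv ?_
      symm
      ext i
      simp only [WithLp.ofLp_add, WithLp.ofLp_smul, WithLp.ofLp_neg, Pi.add_apply, Pi.smul_apply,
      Pi.neg_apply, smul_eq_mul]
      field_simp
      ring
    have hVV : ∀ u ∈ I, ⟪V u, V u⟫ = 1 := by
      intro u hu
      simp only [hVdef, real_inner_smul_left, real_inner_smul_right, hWW u hu]
      rw [← Real.sqrt_mul_self hsq.le]
      field_simp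
      rw [Real.sq_sqrt (Real.sqrt_nonneg _)]
    set e : ℝ → ℝ := fun u => ⟪f u, V u⟫ with hedef
    have heval : ∀ u ∈ I, (e u = 1 ∧ f u = V u) ∨ (e u = -1 ∧ f u = -V u) := by
      intro u hu
      rcases part1 u hu with h | h
      · left
        have hfu : f u = V u := h
        refine ⟨?_, hfu⟩
        show (⟪f u, V u⟫ : ℝ) = 1
        rw [hfu]; exact hVV u hu
      · right
        have hfu : f u = -V u := h
        refine ⟨?_, hfu⟩
        show (⟪f u, V u⟫ : ℝ) = -1
        rw [hfu, inner_neg_left, hVV u hu]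
    have hfe : ∀ u ∈ I, f u = e u • V u := by
      intro u hu
      rcases heval u hu with ⟨h1, h2⟩ | ⟨h1, h2⟩
      · rw [h2, h1, one_smul]
      · rw [h2, h1, neg_one_smul]
    have hecont : ContinuousAt e s :=
      hdiff.continuousAt.inner hV'.differentiableAt.continuousAt
    have hev : f =ᶠ[nhds s] fun u => e s • V u := by
      have h1 : ∀ᶠ u in nhds s, u ∈ I := hI.mem_nhds hs
      have h2 : ∀ᶠ u in nhds s, dist (e u) (e s) < 1 :=
        hecont.tendsto (Metric.ball_mem_nhds _ one_pos)
      filter_upwards [h1, h2] with u hu hd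
      have : e u = e s := by
        rw [Real.dist_eq] at hd
        rcases heval u hu with ⟨h1', _⟩ | ⟨h1', _⟩ <;>
          rcases heval s hs with ⟨h2', _⟩ | ⟨h2', _⟩ <;>
            rw [h1', h2'] at hd ⊢ <;> norm_num at hd
      rw [hfe u hu, this]
    refine ⟨e s * ((Real.sqrt (a ^ 2 + 1))⁻¹ * (a - τ s / κ s)), ?_⟩
    calc deriv f s = deriv (fun u => e s • V u) s := hev.deriv_eq
      _ = e s • (((Real.sqrt (a ^ 2 + 1))⁻¹ * (a - τ s / κ s)) • N s) :=
          (hV'.const_smul (e s)).deriv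
      _ = (e s * ((Real.sqrt (a ^ 2 + 1))⁻¹ * (a - τ s / κ s))) • N s := smul_smul ..
  · exact ⟨0, by rw [deriv_zero_of_not_differentiableAt hdiff, zero_smul]⟩
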